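/- Let 0 < a < 1 and z > 0, and let Γ(a,z) = ∫_z^∞ t^{a−1} e^{−t} dt denote the upper incomplete Gamma function. Then ( z/(z+1−a) ) · e^{−z} z^{a−1} < Γ(a,z) ≤ e^{−z} z^{a−1}. -/

import Mathlib

open Real MeasureTheory Set Filter Topology ENNReal

/-- **Bounds for the upper incomplete Gamma function.**
For `0 < a < 1` and `z > 0`, with `Γ(a,z) = ∫_z^∞ t^(a-1) e^(-t) dt`, we have
`(z/(z+1-a)) · e^(-z) z^(a-1) < Γ(a,z) ≤ e^(-z) z^(a-1)`. -/
theorem incomplete_gamma_bounds (a z : ℝ) (ha0 : 0 < a) (ha1 : a < 1) (hz : 0 < z) :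
    z / (z + 1 - a) * (Real.exp (-z) * z ^ (a - 1))
        < ∫ t in Set.Ioi z, t ^ (a - 1) * Real.exp (-t) ∧
      (∫ t in Set.Ioi z, t ^ (a - 1) * Real.exp (-t)) ≤ Real.exp (-z) * z ^ (a - 1) := by
  set c : ℝ := z / (z + 1 - a) with hc
  have hden : 0 < z + 1 - a := by linarith
  have hc0 : 0 < c := div_pos hz hden
  set g : ℝ → ℝ := fun t => t ^ (a - 1) * Real.exp (-t) with hg
  set f : ℝ → ℝ := fun t => -c * (t ^ (a - 1) * Real.exp (-t)) with hf
  set f' : ℝ → ℝ := fun t => c * ((t + 1 - a) * (t ^ (a - 2) * Real.exp (-t))) with hf'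
  have hbint : IntegrableOn (fun t => z ^ (a - 1) * Real.exp (-t)) (Ioi z) := by
    have := (exp_neg_integrableOn_Ioi z one_pos).const_mul (z ^ (a - 1))
    simpa [IntegrableOn] using this
  have hgle : ∀ t ∈ Ioi z, g t ≤ z ^ (a - 1) * Real.exp (-t) := by
    intro t ht
    exact mul_le_mul_of_nonneg_right
      (Real.rpow_le_rpow_of_nonpos hz ht.out.le (by linarith)) (Real.exp_pos _).le
  have hgnonneg : ∀ t ∈ Ioi z, 0 ≤ g t := by
    intro t ht
    have ht0 : 0 < t := hz.trans ht
    simp only [hg]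
    positivity
  have hgint : IntegrableOn g (Ioi z) := by
    apply Integrable.mono' hbint
    · apply Measurable.aestronglyMeasurable
      fun_prop
    · filter_upwards [ae_restrict_mem measurableSet_Ioi] with t ht
      rw [Real.norm_eq_abs, abs_of_nonneg (hgnonneg t ht)]
      exact hgle t ht
  have key : ∀ t ∈ Ioi z, f' t < g t := by
    intro t ht
    have htz : z < t := ht
    have ht0 : 0 < t := hz.trans htz
    have hpow : t ^ (a - 1) = t ^ (a - 2) * t := by
      rw [← Real.rpow_add_one ht0.ne']; ring_nf
    have h1 : c * (t + 1 - a) < t := by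
      rw [hc, div_mul_eq_mul_div, div_lt_iff₀ hden]
      nlinarith
    have hX : 0 < t ^ (a - 2) * Real.exp (-t) := by positivity
    calc f' t = (c * (t + 1 - a)) * (t ^ (a - 2) * Real.exp (-t)) := by
          simp only [hf']; ring
      _ < t * (t ^ (a - 2) * Real.exp (-t)) := mul_lt_mul_of_pos_right h1 hX
      _ = g t := by simp only [hg]; rw [hpow]; ring
  have hf'nonneg : ∀ t ∈ Ioi z, 0 ≤ f' t := by
    intro t ht
    have ht0 : 0 < t := hz.trans ht
    have h2 : (0:ℝ) ≤ t + 1 - a := by linarith [ht.out]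
    simp only [hf']
    positivity
  have hf'int : IntegrableOn f' (Ioi z) := by
    apply Integrable.mono' hgint
    · apply Measurable.aestronglyMeasurable
      fun_prop
    · filter_upwards [ae_restrict_mem measurableSet_Ioi] with t ht
      rw [Real.norm_eq_abs, abs_of_nonneg (hf'nonneg t ht)]
      exact (key t ht).le
  have hderiv : ∀ t ∈ Ioi z, HasDerivAt f (f' t) t := by
    intro t ht
    have ht0 : 0 < t := hz.trans ht
    have hpow : t ^ (a - 1) = t ^ (a - 2) * t := by
      rw [← Real.rpow_add_one ht0.ne']; ring_nf
    have h1 : HasDerivAt (fun t : ℝ => t ^ (a - 1)) ((a - 1) * t ^ (a - 2)) t := by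
      have := Real.hasDerivAt_rpow_const (p := a - 1) (Or.inl ht0.ne')
      convert this using 2
      ring
    have h2 : HasDerivAt (fun t : ℝ => Real.exp (-t)) (-Real.exp (-t)) t := by
      simpa using (hasDerivAt_neg t).exp
    have hD := (h1.mul h2).const_mul (-c)
    have heq : f' t = -c * ((a - 1) * t ^ (a - 2) * Real.exp (-t) + t ^ (a - 1) * -Real.exp (-t)) := by
      simp only [hf']
      rw [hpow]
      ring
    rw [hf, heq]
    exact hD
  have htendsto : Tendsto f atTop (𝓝 0) := by
    have h1 : Tendsto (fun t : ℝ => t ^ (a - 1)) atTop (𝓝 0) := by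
      have := tendsto_rpow_neg_atTop (y := 1 - a) (by linarith)
      simpa [neg_sub] using this
    have h2 : Tendsto (fun t : ℝ => Real.exp (-t)) atTop (𝓝 0) := by
      simpa using Real.tendsto_exp_neg_atTop_nhds_zero
    have h3 := (h1.mul h2).const_mul (-c)
    rw [hf]
    simpa using h3
  have hcont : ContinuousWithinAt f (Ici z) z := by
    apply ContinuousAt.continuousWithinAt
    have h1 : ContinuousAt (fun t : ℝ => t ^ (a - 1)) z :=
      Real.continuousAt_rpow_const z (a - 1) (Or.inl hz.ne')
    exact continuousAt_const.mul (h1.mul (Real.continuous_exp.comp continuous_neg).continuousAt)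
  have hFTC : ∫ t in Ioi z, f' t = c * (Real.exp (-z) * z ^ (a - 1)) := by
    rw [integral_Ioi_of_hasDerivAt_of_tendsto hcont hderiv hf'int htendsto]
    simp only [hf]
    ring
  constructor
  · rw [← hFTC]
    have hdiff : 0 < ∫ t in Ioi z, (g t - f' t) := by
      rw [setIntegral_pos_iff_support_of_nonneg_ae]
      · have hsub : Ioi z ⊆ Function.support (fun t => g t - f' t) ∩ Ioi z := fun t ht =>
          ⟨by simp [sub_ne_zero, (key t ht).ne'], ht⟩
        calc (0:ℝ≥0∞) < volume (Ioi z) := by simp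
          _ ≤ _ := measure_mono hsub
      · filter_upwards [ae_restrict_mem measurableSet_Ioi] with t ht
        exact sub_nonneg.2 (key t ht).le
      · exact hgint.sub hf'int
    rw [integral_sub hgint hf'int] at hdiff
    linarith
  · calc (∫ t in Ioi z, g t) ≤ ∫ t in Ioi z, z ^ (a - 1) * Real.exp (-t) :=
          setIntegral_mono_on hgint hbint measurableSet_Ioi hgle
      _ = Real.exp (-z) * z ^ (a - 1) := by
          rw [integral_const_mul, integral_exp_neg_Ioi]; ring
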